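/- Mirror descent one-step progress bound: Let C ⊆ ℝ^p be a convex set, N a norm on ℝ^p, and Ψ : ℝ^p → ℝ a differentiable function that is 1-strongly convex with respect to N on C. Let η > 0, g ∈ ℝ^p, θ_t ∈ C, and suppose θ_{t+1} ∈ C attains the minimum over C of the function θ ↦ ⟨η·g − ∇Ψ(θ_t), θ⟩ + Ψ(θ). Then for every θ* ∈ C, η·⟨g, θ_t − θ*⟩ ≤ B_Ψ(θ*, θ_t) − B_Ψ(θ*, θ_{t+1}) + (η²/2)·N*(g)². -/

import Mathlib

open scoped BigOperators
open RealInnerProductSpace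

/-- The dual norm `N*(g) = sup { ⟨g, v⟩ : N(v) ≤ 1 }` of a norm `N` on `ℝ^p`. -/
noncomputable def dualNorm {p : ℕ} (N : EuclideanSpace ℝ (Fin p) → ℝ)
    (g : EuclideanSpace ℝ (Fin p)) : ℝ :=
  sSup {r : ℝ | ∃ v : EuclideanSpace ℝ (Fin p), N v ≤ 1 ∧ r = ⟪g, v⟫}

/-- Bregman divergence `B_Ψ(x, y) = Ψ(x) − Ψ(y) − ⟨∇Ψ(y), x − y⟩` where `Ψ'` is the
gradient of `Ψ`. -/
noncomputable def breg {p : ℕ} (Ψ : EuclideanSpace ℝ (Fin p) → ℝ)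
    (Ψ' : EuclideanSpace ℝ (Fin p) → EuclideanSpace ℝ (Fin p))
    (x y : EuclideanSpace ℝ (Fin p)) : ℝ :=
  Ψ x - Ψ y - ⟪Ψ' y, x - y⟫

/-- `N` is a norm on `ℝ^p`. -/
def IsNorm {p : ℕ} (N : EuclideanSpace ℝ (Fin p) → ℝ) : Prop :=
  (∀ x y, N (x + y) ≤ N x + N y) ∧ (∀ (c : ℝ) (x : EuclideanSpace ℝ (Fin p)),
    N (c • x) = |c| * N x) ∧ (∀ x, N x = 0 ↔ x = 0)

section Aux

variable {p : ℕ} {N : EuclideanSpace ℝ (Fin p) → ℝ}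

lemma IsNorm.zero' (hN : IsNorm N) : N 0 = 0 := by
  have := hN.2.1 0 0; simpa using this

lemma IsNorm.nonneg' (hN : IsNorm N) (x : EuclideanSpace ℝ (Fin p)) : 0 ≤ N x := by
  have h1 := hN.1 x (-x)
  have h2 : N (-x) = N x := by simpa using hN.2.1 (-1) x
  have h0 : N (x + -x) = 0 := by simpa using hN.zero'
  linarith [h1, h2.ge, h0.le]

lemma IsNorm.neg_eq' (hN : IsNorm N) (x : EuclideanSpace ℝ (Fin p)) : N (-x) = N x := by
  simpa using hN.2.1 (-1) x

lemma IsNorm.lipschitz' (hN : IsNorm N) :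
    ∃ K : ℝ, 0 ≤ K ∧ ∀ x, N x ≤ K * ‖x‖ := by
  classical
  refine ⟨∑ i, N (EuclideanSpace.single i (1:ℝ)), Finset.sum_nonneg fun i _ => hN.nonneg' _, ?_⟩
  intro x
  have hdecomp : x = ∑ i, (x i) • EuclideanSpace.single i (1:ℝ) := by
    have := (EuclideanSpace.basisFun (Fin p) ℝ).sum_repr x
    simp only [EuclideanSpace.basisFun_repr, EuclideanSpace.basisFun_apply] at this
    exact this.symm
  have hsum : ∀ (s : Finset (Fin p)) (f : Fin p → EuclideanSpace ℝ (Fin p)),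
      N (∑ i ∈ s, f i) ≤ ∑ i ∈ s, N (f i) := by
    intro s
    induction s using Finset.cons_induction with
    | empty => intro f; simp [hN.zero']
    | cons a s ha ih =>
      intro f
      rw [Finset.sum_cons, Finset.sum_cons]
      exact le_trans (hN.1 _ _) (by linarith [ih f])
  calc N x = N (∑ i, (x i) • EuclideanSpace.single i (1:ℝ)) := by rw [← hdecomp]
    _ ≤ ∑ i, N ((x i) • EuclideanSpace.single i (1:ℝ)) := hsum _ _
    _ ≤ ∑ i, N (EuclideanSpace.single i (1:ℝ)) * ‖x‖ := by
        refine Finset.sum_le_sum fun i _ => ?_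
        rw [hN.2.1]
        have h1 : |x i| ≤ ‖x‖ := by
          have := abs_real_inner_le_norm (EuclideanSpace.single i (1:ℝ)) x
          simpa [EuclideanSpace.inner_single_left, EuclideanSpace.norm_single] using this
        have := hN.nonneg' (EuclideanSpace.single i (1:ℝ))
        nlinarith
    _ = (∑ i, N (EuclideanSpace.single i (1:ℝ))) * ‖x‖ := by rw [Finset.sum_mul]

lemma IsNorm.continuous' (hN : IsNorm N) : Continuous N := by
  obtain ⟨K, hK0, hK⟩ := hN.lipschitz'
  rw [Metric.continuous_iff]
  intro x ε hε
  have hKpos : 0 < K + 1 := by linarith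
  have hK' : ∀ z, N z ≤ (K + 1) * ‖z‖ := fun z => le_trans (hK z)
    (by nlinarith [norm_nonneg z])
  refine ⟨ε / (K + 1), by positivity, fun y hy => ?_⟩
  have h1 := hK' (y - x)
  have h5 := hN.1 x (y - x); have h6 := hN.1 y (x - y)
  simp only [add_sub_cancel] at h5 h6
  have h7 : N (x - y) ≤ (K + 1) * ‖x - y‖ := hK' _
  rw [Real.dist_eq, abs_lt]
  rw [dist_eq_norm] at hy
  have h8 : ‖x - y‖ = ‖y - x‖ := by rw [← neg_sub y x, norm_neg]
  rw [h8] at h7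
  have h9 : (K + 1) * (ε / (K + 1)) = ε := by field_simp
  have h10 : (K + 1) * ‖y - x‖ < (K + 1) * (ε / (K + 1)) :=
    mul_lt_mul_of_pos_left hy hKpos
  constructor <;> linarith

lemma IsNorm.exists_lower' (hN : IsNorm N) :
    ∃ c : ℝ, 0 < c ∧ ∀ v, c * ‖v‖ ≤ N v := by
  rcases subsingleton_or_nontrivial (EuclideanSpace ℝ (Fin p)) with h | h
  · exact ⟨1, one_pos, fun v => by
      have : v = 0 := Subsingleton.elim v 0
      simp [this, hN.zero']⟩
  · have hcpt : IsCompact (Metric.sphere (0 : EuclideanSpace ℝ (Fin p)) 1) :=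
      isCompact_sphere 0 1
    have hne : (Metric.sphere (0 : EuclideanSpace ℝ (Fin p)) 1).Nonempty := by
      exact NormedSpace.sphere_nonempty.2 zero_le_one
    obtain ⟨v0, hv0, hmin⟩ := hcpt.exists_isMinOn hne hN.continuous'.continuousOn
    have hv0norm : ‖v0‖ = 1 := by simpa using hv0
    have hv0ne : v0 ≠ 0 := by intro h0; rw [h0] at hv0norm; simp at hv0norm
    have hc : 0 < N v0 := lt_of_le_of_ne (hN.nonneg' v0) fun h0 => hv0ne ((hN.2.2 v0).1 h0.symm)
    refine ⟨N v0, hc, fun v => ?_⟩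
    rcases eq_or_ne v 0 with rfl | hv
    · simp [hN.zero']
    · have hvn : (0:ℝ) < ‖v‖ := norm_pos_iff.2 hv
      have hmem : (‖v‖⁻¹ • v) ∈ Metric.sphere (0 : EuclideanSpace ℝ (Fin p)) 1 := by
        simp [norm_smul, abs_of_pos (inv_pos.2 hvn), inv_mul_cancel₀ hvn.ne']
      have h2 : N (‖v‖⁻¹ • v) = ‖v‖⁻¹ * N v := by
        rw [hN.2.1]; rw [abs_of_pos (inv_pos.2 hvn)]
      have h3 : N v0 ≤ ‖v‖⁻¹ * N v := by rw [← h2]; exact hmin hmem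
      have h4 : ‖v‖ * (‖v‖⁻¹ * N v) = N v := by field_simp
      nlinarith [mul_le_mul_of_nonneg_left h3 hvn.le]

lemma IsNorm.inner_le_dual' (hN : IsNorm N) (g v : EuclideanSpace ℝ (Fin p)) :
    ⟪g, v⟫ ≤ dualNorm N g * N v := by
  obtain ⟨c, hc, hlow⟩ := hN.exists_lower'
  have hbdd : BddAbove {r : ℝ | ∃ v : EuclideanSpace ℝ (Fin p), N v ≤ 1 ∧ r = ⟪g, v⟫} := by
    refine ⟨‖g‖ / c, fun r hr => ?_⟩
    obtain ⟨u, hu1, rfl⟩ := hr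
    have h1 : ⟪g, u⟫ ≤ ‖g‖ * ‖u‖ := real_inner_le_norm g u
    have h2 : c * ‖u‖ ≤ N u := hlow u
    have h3 : ‖u‖ ≤ 1 / c := (le_div_iff₀ hc).2 (by rw [mul_comm]; linarith)
    have h4 := mul_le_mul_of_nonneg_left h3 (norm_nonneg g)
    have h5 : ‖g‖ * (1 / c) = ‖g‖ / c := by ring
    linarith
  rcases eq_or_ne v 0 with rfl | hv
  · simp [hN.zero']
  · have hvpos : 0 < N v :=
      lt_of_le_of_ne (hN.nonneg' v) fun h0 => hv ((hN.2.2 v).1 h0.symm)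
    have hmem : (N v)⁻¹ * ⟪g, v⟫ ∈
        {r : ℝ | ∃ u : EuclideanSpace ℝ (Fin p), N u ≤ 1 ∧ r = ⟪g, u⟫} := by
      refine ⟨(N v)⁻¹ • v, ?_, ?_⟩
      · rw [hN.2.1, abs_of_pos (inv_pos.2 hvpos), inv_mul_cancel₀ hvpos.ne']
      · rw [real_inner_smul_right]
    have hle : (N v)⁻¹ * ⟪g, v⟫ ≤ dualNorm N g := le_csSup hbdd hmem
    have := mul_le_mul_of_nonneg_left hle hvpos.le
    rw [← mul_assoc, mul_inv_cancel₀ hvpos.ne', one_mul] at this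
    linarith [this]

lemma hasDerivAt_line' (Ψ : EuclideanSpace ℝ (Fin p) → ℝ) (g : EuclideanSpace ℝ (Fin p))
    (y d : EuclideanSpace ℝ (Fin p)) (h : HasGradientAt Ψ g y) :
    HasDerivAt (fun α : ℝ => Ψ (y + α • d)) ⟪g, d⟫ 0 := by
  have hline : HasDerivAt (fun α : ℝ => y + α • d) d 0 := by
    simpa using ((hasDerivAt_id (0:ℝ)).smul_const d).const_add y
  have h2 : HasFDerivAt Ψ ((InnerProductSpace.toDual ℝ (EuclideanSpace ℝ (Fin p))) g)
      ((fun α : ℝ => y + α • d) 0) := by simpa using h.hasFDerivAt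
  have := h2.comp_hasDerivAt 0 hline
  simp only [InnerProductSpace.toDual_apply_apply] at this
  exact this

lemma deriv_le_of_slope_le' {φ : ℝ → ℝ} {m A B : ℝ} (h : HasDerivAt φ m 0)
    (hb : ∀ α ∈ Set.Ioc (0:ℝ) 1, (φ α - φ 0) / α ≤ A + α * B) : m ≤ A := by
  have hs : Filter.Tendsto (slope φ 0) (nhdsWithin 0 (Set.Ioi 0)) (nhds m) :=
    (hasDerivAt_iff_tendsto_slope.1 h).mono_left
      (nhdsWithin_mono _ (by intro x hx; simpa using (ne_of_gt hx)))
  have hg : Filter.Tendsto (fun α : ℝ => A + α * B) (nhdsWithin 0 (Set.Ioi 0)) (nhds A) := by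
    have : Filter.Tendsto (fun α : ℝ => A + α * B) (nhds 0) (nhds (A + 0 * B)) := by
      exact (continuous_const.add (continuous_id.mul continuous_const)).tendsto 0
    simpa using this.mono_left nhdsWithin_le_nhds
  refine le_of_tendsto_of_tendsto hs hg ?_
  filter_upwards [Ioc_mem_nhdsGT_of_mem (by norm_num : (0:ℝ) ∈ Set.Ico 0 1)] with α hα
  have := hb α hα
  simpa [slope_def_field, div_eq_inv_mul] using this

lemma deriv_ge_of_slope_ge' {φ : ℝ → ℝ} {m A B : ℝ} (h : HasDerivAt φ m 0)
    (hb : ∀ α ∈ Set.Ioc (0:ℝ) 1, A + α * B ≤ (φ α - φ 0) / α) : A ≤ m := by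
  have := deriv_le_of_slope_le' (h.neg) (A := -A) (B := -B) (fun α hα => by
    have := hb α hα
    have heq : (-φ α - -φ 0) / α = -((φ α - φ 0) / α) := by ring
    simp only [Pi.neg_apply]; rw [heq]; linarith)
  linarith

end Aux

/-- Mirror descent one-step progress bound. -/
theorem mirror_descent_one_step {p : ℕ}
    (C : Set (EuclideanSpace ℝ (Fin p))) (hC : Convex ℝ C)
    (N : EuclideanSpace ℝ (Fin p) → ℝ) (hN : IsNorm N)
    (Ψ : EuclideanSpace ℝ (Fin p) → ℝ)
    (Ψ' : EuclideanSpace ℝ (Fin p) → EuclideanSpace ℝ (Fin p))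
    (hΨdiff : ∀ x, HasGradientAt Ψ (Ψ' x) x)
    (hΨsc : ∀ x ∈ C, ∀ y ∈ C, ∀ α ∈ Set.Icc (0:ℝ) 1,
      Ψ (α • x + (1 - α) • y) ≤
        α * Ψ x + (1 - α) * Ψ y - 1 * α * (1 - α) / 2 * (N (x - y)) ^ 2)
    (η : ℝ) (hη : 0 < η)
    (g θt θt1 : EuclideanSpace ℝ (Fin p))
    (hθt : θt ∈ C) (hθt1 : θt1 ∈ C)
    (hmin : ∀ θ ∈ C,
      ⟪η • g - Ψ' θt, θt1⟫ + Ψ θt1 ≤ ⟪η • g - Ψ' θt, θ⟫ + Ψ θ)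
    (θs : EuclideanSpace ℝ (Fin p)) (hθs : θs ∈ C) :
    η * ⟪g, θt - θs⟫ ≤
      breg Ψ Ψ' θs θt - breg Ψ Ψ' θs θt1 + η ^ 2 / 2 * (dualNorm N g) ^ 2 := by
  -- strong convexity lower bound on Bregman divergence
  have key : ∀ x ∈ C, ∀ y ∈ C, ⟪Ψ' y, x - y⟫ ≤ Ψ x - Ψ y - (N (x - y)) ^ 2 / 2 := by
    intro x hx y hy
    have hder := hasDerivAt_line' Ψ (Ψ' y) y (x - y) (hΨdiff y)
    refine deriv_le_of_slope_le' hder (B := (N (x - y)) ^ 2 / 2) (fun α hα => ?_)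
    have hα0 : (0:ℝ) < α := hα.1
    have hcomb : y + α • (x - y) = α • x + (1 - α) • y := by module
    have hsc := hΨsc x hx y hy α ⟨hα.1.le, hα.2⟩
    rw [← hcomb] at hsc
    rw [div_le_iff₀ hα0]
    have h0 : (0:ℝ) • (x - y) = 0 := zero_smul _ _
    simp only [h0, add_zero]
    nlinarith [hsc]
  -- variational inequality from minimality
  have hVI : 0 ≤ ⟪η • g - Ψ' θt + Ψ' θt1, θs - θt1⟫ := by
    set w := η • g - Ψ' θt with hw
    have hF : HasGradientAt (fun x => ⟪w, x⟫ + Ψ x) (w + Ψ' θt1) θt1 := by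
      rw [hasGradientAt_iff_hasFDerivAt]
      have h1 : HasFDerivAt (fun x : EuclideanSpace ℝ (Fin p) => ⟪w, x⟫)
          (innerSL ℝ w) θt1 := (innerSL ℝ w).hasFDerivAt
      have h2 := (hΨdiff θt1).hasFDerivAt
      have := h1.add h2
      refine this.congr_fderiv (ContinuousLinearMap.ext fun v => ?_)
      simp [InnerProductSpace.toDual_apply_apply, inner_add_left]
    have hder := hasDerivAt_line' (fun x => ⟪w, x⟫ + Ψ x) (w + Ψ' θt1) θt1 (θs - θt1) hF
    have h0 := deriv_ge_of_slope_ge' hder (A := 0) (B := 0) (fun α hα => by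
      have hα0 : (0:ℝ) < α := hα.1
      have hmem : θt1 + α • (θs - θt1) ∈ C := by
        have : θt1 + α • (θs - θt1) = α • θs + (1 - α) • θt1 := by module
        rw [this]
        exact hC hθs hθt1 hα.1.le (by linarith [hα.2]) (by ring)
      have hm := hmin _ hmem
      have h0 : (0:ℝ) • (θs - θt1) = 0 := zero_smul _ _
      simp only [h0, add_zero]
      rw [mul_zero, add_zero, le_div_iff₀ hα0, zero_mul, sub_nonneg]
      exact hm)
    linarith [h0]
  -- dual norm bound and assembly
  set D := dualNorm N g with hD
  have hge : ⟪g, θt - θt1⟫ ≤ D * N (θt - θt1) := hN.inner_le_dual' g (θt - θt1)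
  have hB1 : ⟪Ψ' θt, θt1 - θt⟫ ≤ Ψ θt1 - Ψ θt - (N (θt1 - θt)) ^ 2 / 2 := key θt1 hθt1 θt hθt
  have hsym : N (θt1 - θt) = N (θt - θt1) := by rw [← hN.neg_eq' (θt - θt1), neg_sub]
  rw [hsym] at hB1
  set n := N (θt - θt1) with hn
  simp only [breg, inner_sub_left, inner_sub_right, inner_add_left,
    real_inner_smul_left] at hVI hge hB1 ⊢
  nlinarith [sq_nonneg (η * D - n), mul_le_mul_of_nonneg_left hge hη.le, hVI, hB1]
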